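/- In the timed modal epistemic logic tK, from hypotheses K¹(E₁ ∨ E₂) and φ, where φ = (E₁ ⊻ E₂) ∧ (E₁ → ⋀_{0≤i<10} ¬Kⁱ E₁) ∧ (E₂ → (⋀_{0≤i<20} ¬Kⁱ E₂ ∧ ⋀_{10<i≤20} Kⁱ ¬E₁)), one can derive ¬E₂. -/
import Mathlib


/-- Formulas of timed modal epistemic logic: `K i A` means "`A` is known at
time `i`". -/
inductive Fm : Type
  | atom : ℕ → Fm
  | bot : Fm
  | imp : Fm → Fm → Fm
  | K : ℕ → Fm → Fm

namespace Fm

def neg (A : Fm) : Fm := imp A bot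
def disj (A B : Fm) : Fm := imp (neg A) B
def conj (A B : Fm) : Fm := neg (imp A (neg B))
/-- Exclusive disjunction. -/
def xor' (A B : Fm) : Fm := conj (disj A B) (neg (conj A B))

/-- Big conjunction of a list of formulas. -/
def bigConj (l : List Fm) : Fm := l.foldr conj (neg bot)

end Fm

open Fm

/-- The teacher's announcement `φ` for the two-day Surprise Test Paradox
(announcement at time 0, Friday class at time 10, Wednesday class at time 20):
exactly one of `E₁`, `E₂` holds; if `E₁` then `¬Kⁱ E₁` for all `0 ≤ i < 10`;
if `E₂` then `¬Kⁱ E₂` for all `0 ≤ i < 20` and `Kⁱ ¬E₁` for all `10 < i ≤ 20`. -/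
def phi (E₁ E₂ : Fm) : Fm :=
  conj (xor' E₁ E₂)
    (conj (imp E₁ (bigConj ((List.range 10).map fun i => neg (K i E₁))))
      (imp E₂ (conj (bigConj ((List.range 20).map fun i => neg (K i E₂)))
        (bigConj ((List.range 10).map fun j => K (j + 11) (neg E₁))))))

/-- Provability in the timed modal epistemic logic tK: propositional
tautologies (via a Hilbert basis), axiom tK: `Kⁱ(A→B) → (Kʲ A → Kᵏ B)` for
`i, j < k`, monotonicity Mon: `Kⁱ A → Kʲ A` for `i < j`; rules: MP, deduction
by epistemization DE, and epistemization E. -/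
inductive TK : Fm → Prop
  | ax1 (A B : Fm) : TK (imp A (imp B A))
  | ax2 (A B C : Fm) : TK (imp (imp A (imp B C)) (imp (imp A B) (imp A C)))
  | ax3 (A B : Fm) : TK (imp (imp (neg A) (neg B)) (imp B A))
  | tk {i j k : ℕ} (hik : i < k) (hjk : j < k) (A B : Fm) :
      TK (imp (K i (imp A B)) (imp (K j A) (K k B)))
  | mon {i j : ℕ} (hij : i < j) (A : Fm) : TK (imp (K i A) (K j A))
  | mp {A B : Fm} : TK (imp A B) → TK A → TK B
  | de {i j : ℕ} (hij : i < j) {A : Fm} : TK A → TK (imp (K i A) (K j (K i A)))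
  | e (i : ℕ) {A : Fm} : TK A → TK (K i A)

/-- Derivability in tK from a list of hypotheses. -/
inductive Deriv (Γ : List Fm) : Fm → Prop
  | hyp {A : Fm} : A ∈ Γ → Deriv Γ A
  | thm {A : Fm} : TK A → Deriv Γ A
  | mp {A B : Fm} : Deriv Γ (imp A B) → Deriv Γ A → Deriv Γ B

namespace Aux
open Fm

lemma weaken {Γ Δ : List Fm} (h : ∀ A ∈ Γ, A ∈ Δ) {A : Fm} (d : Deriv Γ A) :
    Deriv Δ A := by
  induction d with
  | hyp hA => exact Deriv.hyp (h _ hA)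
  | thm t => exact Deriv.thm t
  | mp _ _ ih1 ih2 => exact Deriv.mp ih1 ih2

lemma did (Γ : List Fm) (A : Fm) : Deriv Γ (imp A A) :=
  Deriv.mp (Deriv.mp (Deriv.thm (TK.ax2 A (imp A A) A))
    (Deriv.thm (TK.ax1 A (imp A A)))) (Deriv.thm (TK.ax1 A A))

lemma deduction {Γ : List Fm} {A B : Fm} (d : Deriv (A :: Γ) B) :
    Deriv Γ (imp A B) := by
  induction d with
  | hyp hB =>
    cases hB with
    | head => exact did Γ A
    | tail _ hB => exact Deriv.mp (Deriv.thm (TK.ax1 _ _)) (Deriv.hyp hB)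
  | thm t => exact Deriv.mp (Deriv.thm (TK.ax1 _ _)) (Deriv.thm t)
  | mp _ _ ih1 ih2 => exact Deriv.mp (Deriv.mp (Deriv.thm (TK.ax2 _ _ _)) ih1) ih2

lemma efq (Γ : List Fm) (A : Fm) : Deriv Γ (imp bot A) :=
  Deriv.mp (Deriv.thm (TK.ax3 A bot))
    (Deriv.mp (Deriv.thm (TK.ax1 (neg bot) (neg A))) (did Γ bot))

lemma dni (Γ : List Fm) (A : Fm) : Deriv Γ (imp A (neg (neg A))) := by
  apply deduction; apply deduction
  have h1 : Deriv (neg A :: A :: Γ) (neg A) := Deriv.hyp (by simp)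
  have h2 : Deriv (neg A :: A :: Γ) A := Deriv.hyp (by simp)
  exact Deriv.mp h1 h2

lemma comp {Γ : List Fm} {A B C : Fm} (h1 : Deriv Γ (imp A B))
    (h2 : Deriv Γ (imp B C)) : Deriv Γ (imp A C) := by
  apply deduction
  have ha : Deriv (A :: Γ) A := Deriv.hyp (by simp)
  exact Deriv.mp (weaken (fun x hx => List.mem_cons_of_mem _ hx) h2)
    (Deriv.mp (weaken (fun x hx => List.mem_cons_of_mem _ hx) h1) ha)

lemma proj1 (Γ : List Fm) (A B : Fm) : Deriv Γ (imp (conj A B) A) := by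
  apply Deriv.mp (Deriv.thm (TK.ax3 A (conj A B)))
  apply comp (B := imp A (neg B)) _ (dni _ _)
  apply deduction; apply deduction
  apply Deriv.mp (efq _ (neg B))
  have h1 : Deriv (A :: neg A :: Γ) (neg A) := Deriv.hyp (by simp)
  have h2 : Deriv (A :: neg A :: Γ) A := Deriv.hyp (by simp)
  exact Deriv.mp h1 h2

lemma proj2 (Γ : List Fm) (A B : Fm) : Deriv Γ (imp (conj A B) B) := by
  apply Deriv.mp (Deriv.thm (TK.ax3 B (conj A B)))
  apply comp (B := imp A (neg B)) _ (dni _ _)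
  exact Deriv.thm (TK.ax1 (neg B) A)

lemma bigConj_proj {Γ : List Fm} {A : Fm} {l : List Fm} (h : A ∈ l) :
    Deriv Γ (imp (bigConj l) A) := by
  induction l with
  | nil => cases h
  | cons B l ih =>
    cases h with
    | head => exact proj1 Γ _ _
    | tail _ h => exact comp (proj2 Γ B (bigConj l)) (ih h)

end Aux

/-- In tK, from the hypotheses `K¹(E₁ ∨ E₂)` and the announcement `φ`, the
student can derive `¬E₂` (the test cannot be held on the last day). -/


theorem surprise_test_tK (E₁ E₂ : Fm) :
    Deriv [K 1 (disj E₁ E₂), phi E₁ E₂] (neg E₂) := by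
  show Deriv _ (imp E₂ bot)
  apply Aux.deduction
  set Γ : List Fm := E₂ :: [K 1 (disj E₁ E₂), phi E₁ E₂] with hΓ
  have hφ : Deriv Γ (phi E₁ E₂) := Deriv.hyp (by simp [hΓ])
  have hE₂ : Deriv Γ E₂ := Deriv.hyp (by simp [hΓ])
  have h2 := Deriv.mp (Aux.proj2 Γ _ _) hφ
  have hZ := Deriv.mp (Aux.proj2 Γ _ _) h2
  have hCD := Deriv.mp hZ hE₂
  have hC := Deriv.mp (Aux.proj1 Γ _ _) hCD
  have hD := Deriv.mp (Aux.proj2 Γ _ _) hCD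
  have hK12 : Deriv Γ (K 12 (neg E₁)) := by
    refine Deriv.mp (Aux.bigConj_proj ?_) hD
    exact List.mem_map.mpr ⟨1, List.mem_range.mpr (by norm_num), rfl⟩
  have hnK13 : Deriv Γ (neg (K 13 E₂)) := by
    refine Deriv.mp (Aux.bigConj_proj ?_) hC
    exact List.mem_map.mpr ⟨13, List.mem_range.mpr (by norm_num), rfl⟩
  have htk : Deriv Γ (imp (K 1 (imp (neg E₁) E₂)) (imp (K 12 (neg E₁)) (K 13 E₂))) :=
    Deriv.thm (TK.tk (by norm_num) (by norm_num) _ _)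
  have hK1 : Deriv Γ (K 1 (imp (neg E₁) E₂)) := Deriv.hyp (by simp [hΓ, disj])
  have hK13 := Deriv.mp (Deriv.mp htk hK1) hK12
  exact Deriv.mp hnK13 hK13
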